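/- Let T be a tournament belonging to 𝒜 with at least three vertices. Then T is prime if and only if T is isomorphic to U_n for some integer n ≥ 2. -/

import Mathlib

/-- A tournament: a finite vertex type with an orientation of each pair of
distinct vertices. -/
structure Tournament : Type 1 where
  V : Type
  [fintypeV : Fintype V]
  adj : V → V → Prop
  irrefl : ∀ v, ¬ adj v v
  total : ∀ u v, u ≠ v → adj u v ∨ adj v u
  asymm : ∀ u v, adj u v → ¬ adj v u

attribute [instance] Tournament.fintypeV

namespace Tournament

/-- A set of vertices is transitive: the induced subtournament has no directed
cycle (equivalently, the adjacency relation is transitive on it). -/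
def IsTransSet (T : Tournament) (S : Set T.V) : Prop :=
  ∀ a ∈ S, ∀ b ∈ S, ∀ c ∈ S, T.adj a b → T.adj b c → T.adj a c

/-- The chromatic number of a tournament: least number of transitive sets
partitioning the vertex set. -/
noncomputable def chromNum (T : Tournament) : ℕ :=
  sInf {k | ∃ c : T.V → Fin k, ∀ i, T.IsTransSet {v | c v = i}}

/-- `T.Contains S`: `S` is isomorphic to a subtournament of `T`. -/
def Contains (T S : Tournament) : Prop :=
  ∃ f : S.V → T.V, Function.Injective f ∧ ∀ u v, S.adj u v ↔ T.adj (f u) (f v)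

/-- `T.Iso S`: `T` and `S` are isomorphic tournaments. -/
def Iso (T S : Tournament) : Prop :=
  ∃ f : S.V → T.V, Function.Bijective f ∧ ∀ u v, S.adj u v ↔ T.adj (f u) (f v)

/-- A set of tournaments is heroic if excluding all its members bounds the
chromatic number. -/
def Heroic (H : Set Tournament) : Prop :=
  ∃ c, ∀ T : Tournament, (∀ X ∈ H, ¬ T.Contains X) → T.chromNum ≤ c

/-- A tournament is a hero if `{H}` is heroic. -/
def IsHero (H : Tournament) : Prop :=
  ∃ c, ∀ T : Tournament, ¬ T.Contains H → T.chromNum ≤ c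

/-- A class of tournaments is hereditary if closed under subtournaments up to
isomorphism. -/
def Hereditary (C : Set Tournament) : Prop :=
  ∀ T ∈ C, ∀ S : Tournament, T.Contains S → S ∈ C

def StronglyConnected (T : Tournament) : Prop :=
  ∀ u v : T.V, Relation.ReflTransGen T.adj u v

/-- A transitive tournament (no directed cycle). -/
def IsTransTour (T : Tournament) : Prop :=
  ∀ a b c : T.V, T.adj a b → T.adj b c → T.adj a c

/-- Direction rule for Δ-partitions with 0-based part-indices (a part is at an
odd position in the 1-based sense iff its 0-based index is even).
`deltaDir i j` holds iff part `i` is complete to part `j`: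
for `i < j`, part `j` beats part `i` iff both positions are (1-based) odd. -/
def deltaDir {m : ℕ} (i j : Fin m) : Prop :=
  (i < j ∧ ¬ (Even i.1 ∧ Even j.1)) ∨ (j < i ∧ (Even i.1 ∧ Even j.1))

theorem deltaDir_irrefl {m : ℕ} (i : Fin m) : ¬ deltaDir i i := by
  rintro (⟨h, _⟩ | ⟨h, _⟩) <;> exact lt_irrefl _ h

theorem deltaDir_total {m : ℕ} {i j : Fin m} (h : i ≠ j) : deltaDir i j ∨ deltaDir j i := by
  rcases lt_or_gt_of_ne h with hl | hl
  · by_cases he : Even i.1 ∧ Even j.1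
    · exact Or.inr (Or.inr ⟨hl, he.2, he.1⟩)
    · exact Or.inl (Or.inl ⟨hl, he⟩)
  · by_cases he : Even i.1 ∧ Even j.1
    · exact Or.inl (Or.inr ⟨hl, he⟩)
    · exact Or.inr (Or.inl ⟨hl, fun hc => he ⟨hc.2, hc.1⟩⟩)

theorem deltaDir_asymm {m : ℕ} {i j : Fin m} (h : deltaDir i j) : ¬ deltaDir j i := by
  rcases h with ⟨h1, h2⟩ | ⟨h1, h2⟩ <;> rintro (⟨g1, g2⟩ | ⟨g1, g2⟩)
  · exact lt_asymm h1 g1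
  · exact h2 ⟨g2.2, g2.1⟩
  · exact g2 ⟨h2.2, h2.1⟩
  · exact lt_asymm h1 g1

/-- The tournament `Δ(F 0, F 1, …, F (m-1))` given by a Δ-partition rule:
within a part use the part's edges; between parts, edges follow `deltaDir`.
For `m = 3` this is the trisection `Δ(A,B,C)` (`X ⇒ Y`, `Y ⇒ Z`, `Z ⇒ X`),
and for `m = 2` it is `F 0 ⇒ F 1`. -/
def deltaSum {m : ℕ} (F : Fin m → Tournament) : Tournament where
  V := (i : Fin m) × (F i).V
  adj x y := deltaDir x.1 y.1 ∨
    ∃ (i : Fin m) (u v : (F i).V), (F i).adj u v ∧ x = ⟨i, u⟩ ∧ y = ⟨i, v⟩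
  irrefl := by
    rintro x (h | ⟨i, u, v, hadj, rfl, h2⟩)
    · exact deltaDir_irrefl _ h
    · injection h2 with h h'
      subst h'
      exact (F i).irrefl u hadj
  total := by
    rintro ⟨i, a⟩ ⟨j, b⟩ hne
    by_cases hij : i = j
    · subst hij
      have hab : a ≠ b := fun h => hne (by rw [h])
      rcases (F i).total a b hab with h | h
      · exact Or.inl (Or.inr ⟨i, a, b, h, rfl, rfl⟩)
      · exact Or.inr (Or.inr ⟨i, b, a, h, rfl, rfl⟩)
    · rcases deltaDir_total hij with h | h
      · exact Or.inl (Or.inl h)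
      · exact Or.inr (Or.inl h)
  asymm := by
    rintro x y hxy hyx
    rcases hxy with h | ⟨i, u, v, hadj, rfl, rfl⟩
    · rcases hyx with g | ⟨j, p, q, gadj, rfl, rfl⟩
      · exact deltaDir_asymm h g
      · exact deltaDir_irrefl _ h
    · rcases hyx with g | ⟨j, p, q, gadj, h1, h2⟩
      · exact deltaDir_irrefl _ g
      · injection h1 with hij hp
        subst hij
        obtain rfl := eq_of_heq hp
        injection h2 with h h'
        subst h'
        exact (F i).asymm u v hadj gadj

/-- The one-vertex tournament `I`. -/
def oneTour : Tournament where
  V := Unit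
  adj _ _ := False
  irrefl := fun _ h => h
  total := fun u v h => (h (Subsingleton.elim u v)).elim
  asymm := fun _ _ h => h.elim

/-- The transitive tournament `L k` on `k` vertices. -/
def linTour (k : ℕ) : Tournament where
  V := Fin k
  adj i j := i < j
  irrefl := fun v => lt_irrefl v
  total := fun _ _ h => lt_or_gt_of_ne h
  asymm := fun _ _ h => lt_asymm h

/-- `Dtour n` is the tournament `D_n`: `D_1 = I`, `D_n = Δ(I, D_{n-1}, D_{n-1})`. -/
def Dtour : ℕ → Tournament
  | 0 => oneTour
  | 1 => oneTour
  | n + 2 => deltaSum ![oneTour, Dtour (n + 1), Dtour (n + 1)]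

/-- `Atour n` is the tournament `A_n`: `A_1 = I`, and `A_n` is a Δ-sum with
`2n-1` parts, the (1-based) odd positions being single vertices and the even
positions copies of `A_{n-1}`. -/
def Atour : ℕ → Tournament
  | 0 => oneTour
  | 1 => oneTour
  | n + 2 =>
      deltaSum fun t : Fin (2 * (n + 2) - 1) => if Even t.1 then oneTour else Atour (n + 1)

/-- `Utour n` is the tournament `U_n = Δ(I, I, …, I)` with `2n-1` one-vertex parts. -/
def Utour (n : ℕ) : Tournament :=
  deltaSum fun _ : Fin (2 * n - 1) => oneTour

/-- `𝒟`: the closure of `{D_n : n ≥ 1}` under subtournaments up to isomorphism. -/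
def classD : Set Tournament :=
  {T | ∃ n : ℕ, 1 ≤ n ∧ (Dtour n).Contains T}

/-- `𝒜`: the closure of `{A_n : n ≥ 1}` under subtournaments up to isomorphism. -/
def classA : Set Tournament :=
  {T | ∃ n : ℕ, 1 ≤ n ∧ (Atour n).Contains T}

/-- `Δ₂ = Δ(L₂, L₂, L₂)`. -/
def delta2 : Tournament :=
  deltaSum ![linTour 2, linTour 2, linTour 2]

/-- The tournament `N`. -/
def Ntour : Tournament where
  V := Fin 5
  adj i j :=
    ![![false, true, false, true, false],
      ![false, false, true, true, true],
      ![true, false, false, true, true],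
      ![false, false, false, false, true],
      ![true, false, false, false, false]] i j = true
  irrefl := by decide
  total := by decide
  asymm := by decide

/-- The tournament `S₃`: `v_i → v_j` iff `j - i ∈ {1, 2} (mod 5)`. -/
def Stour3 : Tournament where
  V := Fin 5
  adj i j := (j.1 + 5 - i.1) % 5 = 1 ∨ (j.1 + 5 - i.1) % 5 = 2
  irrefl := by decide
  total := by decide
  asymm := by decide

/-- A vertex `v` outside `S` is mixed on `S` if it has both an out-neighbor and
an in-neighbor in `S`. -/
def MixedOn (T : Tournament) (v : T.V) (S : Set T.V) : Prop :=
  (∃ s ∈ S, T.adj v s) ∧ (∃ s ∈ S, T.adj s v)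

/-- A homogeneous set: `1 < |S| < |V(T)|` and no vertex outside `S` is mixed on `S`. -/
def Homog (T : Tournament) (S : Set T.V) : Prop :=
  1 < S.ncard ∧ S.ncard < Nat.card T.V ∧ ∀ v ∉ S, ¬ T.MixedOn v S

/-- A prime tournament has no homogeneous set. -/
def Prime (T : Tournament) : Prop := ¬ ∃ S : Set T.V, T.Homog S

/-- `P` is a Δ-partition of `T` with parts `P 0, …, P (m-1)`:
the parts are nonempty, partition `V(T)`, and all edges between distinct parts
follow the rule `deltaDir`. -/
def IsDeltaPartition (T : Tournament) {m : ℕ} (P : Fin m → Set T.V) : Prop :=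
  (∀ i, (P i).Nonempty) ∧
  (∀ v : T.V, ∃! i, v ∈ P i) ∧
  (∀ i j, i ≠ j → ∀ u ∈ P i, ∀ v ∈ P j, (T.adj u v ↔ deltaDir i j))

/-- The induced subtournament on a set of vertices. -/
noncomputable def induce (T : Tournament) (S : Set T.V) : Tournament where
  V := ↥S
  fintypeV := (Set.toFinite S).fintype
  adj u v := T.adj u.1 v.1
  irrefl := fun v => T.irrefl v.1
  total := fun u v h => T.total u.1 v.1 (fun hh => h (Subtype.ext hh))
  asymm := fun u v h => T.asymm u.1 v.1 h

/-- `u` and `v` are joined by an edge of the backedge graph of the ordering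
given by the list `l`: the `T`-edge between them goes backwards in `l`. -/
def BackAdj (T : Tournament) (l : List T.V) (u v : T.V) : Prop :=
  (T.adj u v ∧ [v, u].Sublist l) ∨ (T.adj v u ∧ [u, v].Sublist l)

/-- The backedge graph `B_σ(T)` of the ordering `σ = l`. -/
def backGraph (T : Tournament) (l : List T.V) : SimpleGraph T.V where
  Adj u v := T.BackAdj l u v
  symm := by
    constructor
    intro u v h
    rcases h with ⟨h, s⟩ | ⟨h, s⟩
    · exact Or.inr ⟨h, s⟩
    · exact Or.inl ⟨h, s⟩
  loopless := by
    constructor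
    intro v h
    rcases h with ⟨h, _⟩ | ⟨h, _⟩ <;> exact T.irrefl v h

/-- Forest orderings: a one-element ordering is a forest ordering, and the
concatenation `l₁ ++ l₂` of two nonempty forest orderings is one provided no
two edges of the backedge graph going between `l₁` and `l₂` lie in the same
connected component of the backedge graph. -/
inductive IsForestOrdering (T : Tournament) : List T.V → Prop
  | single (v : T.V) : IsForestOrdering T [v]
  | split (l₁ l₂ : List T.V) (h₁ : l₁ ≠ []) (h₂ : l₂ ≠ [])
      (hsep : ∀ a ∈ l₁, ∀ b ∈ l₂, ∀ c ∈ l₁, ∀ d ∈ l₂,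
        T.BackAdj (l₁ ++ l₂) a b → T.BackAdj (l₁ ++ l₂) c d →
        Relation.ReflTransGen (T.BackAdj (l₁ ++ l₂)) a c → a = c ∧ b = d)
      (f₁ : IsForestOrdering T l₁) (f₂ : IsForestOrdering T l₂) :
      IsForestOrdering T (l₁ ++ l₂)

/-- A forest tournament: one admitting a forest ordering of its vertex set. -/
def IsForestTournament (T : Tournament) : Prop :=
  ∃ l : List T.V, l.Nodup ∧ (∀ v, v ∈ l) ∧ IsForestOrdering T l

/-- The set of ordered pairs realizing backedges between `l₁` and `l₂`. -/
def splitEdges (T : Tournament) (l l₁ l₂ : List T.V) : Set (T.V × T.V) :=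
  {p | p.1 ∈ l₁ ∧ p.2 ∈ l₂ ∧ T.BackAdj l p.1 p.2}

/-- The thickness of the backedge graph of `l`: the minimum number of backedges
crossing a split of `l` into two nonempty intervals. -/
noncomputable def thickness (T : Tournament) (l : List T.V) : ℕ :=
  sInf {k | ∃ l₁ l₂ : List T.V, l = l₁ ++ l₂ ∧ l₁ ≠ [] ∧ l₂ ≠ [] ∧
    k = (T.splitEdges l l₁ l₂).ncard}

/-- The "length" `|φ x - φ y|` of an unordered pair under `φ`. -/
def phiLen {α : Type} (φ : α → ℕ) : Sym2 α → ℕ :=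
  Sym2.lift ⟨fun u v => max (φ u) (φ v) - min (φ u) (φ v), fun u v => by
    show max (φ u) (φ v) - min (φ u) (φ v) = max (φ v) (φ u) - min (φ v) (φ u)
    rw [max_comm (φ u) (φ v), min_comm (φ u) (φ v)]⟩

/-- The backedge graph of the ordering `σ_φ` induced by `φ`. -/
def backGraphPhi (T : Tournament) (φ : T.V → ℕ) : SimpleGraph T.V where
  Adj u v := (T.adj u v ∧ φ v < φ u) ∨ (T.adj v u ∧ φ u < φ v)
  symm := by
    constructor
    intro u v h
    rcases h with h | h
    · exact Or.inr h
    · exact Or.inl h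
  loopless := by
    constructor
    intro v h
    rcases h with ⟨_, h⟩ | ⟨_, h⟩ <;> exact lt_irrefl _ h

/-- Two distinct edges `e`, `f` of `B_{σ_φ}(T)` are `(r,s)`-comparable under `φ`:
some path with at most `s` edges contains both, and `1/r ≤ φ(e)/φ(f) ≤ r`. -/
def Comparable (T : Tournament) (φ : T.V → ℕ) (r s : ℕ) (e f : Sym2 T.V) : Prop :=
  e ≠ f ∧
  (∃ (a b : T.V) (p : (T.backGraphPhi φ).Walk a b),
      p.IsPath ∧ p.length ≤ s ∧ e ∈ p.edges ∧ f ∈ p.edges) ∧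
  phiLen φ e ≤ r * phiLen φ f ∧ phiLen φ f ≤ r * phiLen φ e

/-- The class `𝒞_{(r,s)}`. -/
def classC (r s : ℕ) : Set Tournament :=
  {T | ∃ φ : T.V → ℕ, (∀ v, 0 < φ v) ∧ Function.Injective φ ∧
    ∀ e ∈ (T.backGraphPhi φ).edgeSet, ∀ f ∈ (T.backGraphPhi φ).edgeSet,
      ¬ Comparable T φ r s e f}

/-- `φ` is `r`-incomparable: it is an injective positive labelling such that any
two distinct edges of `B_{σ_φ}(T)` in the same connected component have length
ratio greater than `r` (or less than `1/r`). -/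
def RIncomp (T : Tournament) (φ : T.V → ℕ) (r : ℕ) : Prop :=
  (∀ v, 0 < φ v) ∧ Function.Injective φ ∧
  ∀ e ∈ (T.backGraphPhi φ).edgeSet, ∀ f ∈ (T.backGraphPhi φ).edgeSet, e ≠ f →
    (∃ a b, a ∈ e ∧ b ∈ f ∧ (T.backGraphPhi φ).Reachable a b) →
    (r * phiLen φ f < phiLen φ e ∨ r * phiLen φ e < phiLen φ f)

/-- `l` is an ordering of the vertex set of `T`. -/
def IsOrdering (T : Tournament) (l : List T.V) : Prop :=
  l.Nodup ∧ ∀ v, v ∈ l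

/-- The ordering `l` is incomparable: for every `r ≥ 1` there is an
`r`-incomparable `φ` with `σ_φ = l` (i.e. `φ` strictly increasing along `l`). -/
def IsIncompOrdering (T : Tournament) (l : List T.V) : Prop :=
  ∀ r : ℕ, 0 < r → ∃ φ : T.V → ℕ, RIncomp T φ r ∧ l.Pairwise (fun u v => φ u < φ v)

/-! ### Auxiliary lemmas for the main theorem -/

lemma deltaDir_iff {M : ℕ} (i j : Fin M) :
    deltaDir i j ↔ ((i.1 < j.1 ∧ ¬(i.1 % 2 = 0 ∧ j.1 % 2 = 0)) ∨
      (j.1 < i.1 ∧ (i.1 % 2 = 0 ∧ j.1 % 2 = 0))) := by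
  simp only [deltaDir, Fin.lt_def, Nat.even_iff]

lemma deltaSum_adj_cross {m : ℕ} (F : Fin m → Tournament)
    (x y : (deltaSum F).V) (h : x.1 ≠ y.1) :
    (deltaSum F).adj x y ↔ deltaDir x.1 y.1 := by
  constructor
  · rintro (hd | ⟨i, u, v, hadj, rfl, rfl⟩)
    · exact hd
    · exact absurd rfl h
  · exact Or.inl

lemma deltaSum_adj_same {m : ℕ} (F : Fin m → Tournament) {i : Fin m}
    (u v : (F i).V) :
    (deltaSum F).adj ⟨i, u⟩ ⟨i, v⟩ ↔ (F i).adj u v := by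
  constructor
  · rintro (hd | ⟨k, a, b, hadj, h1, h2⟩)
    · exact absurd hd (deltaDir_irrefl i)
    · obtain ⟨e1, e1'⟩ := Sigma.mk.inj_iff.mp h1
      subst e1
      obtain rfl := eq_of_heq e1'
      obtain ⟨-, e2'⟩ := Sigma.mk.inj_iff.mp h2
      obtain rfl := eq_of_heq e2'
      exact hadj
  · intro h
    exact Or.inr ⟨i, u, v, h, rfl, rfl⟩

lemma utour_adj_cross {n : ℕ} (x y : (Utour n).V) (h : x.1 ≠ y.1) :
    (Utour n).adj x y ↔ deltaDir x.1 y.1 :=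
  deltaSum_adj_cross _ x y h

lemma prime_of_iso {T S : Tournament} (h : T.Iso S) (hS : S.Prime) : T.Prime := by
  obtain ⟨f, hbij, hiff⟩ := h
  rintro ⟨A, hA1, hA2, hA3⟩
  have hrange : A ⊆ Set.range f := by
    rw [Set.range_eq_univ.mpr hbij.2]; exact Set.subset_univ A
  refine hS ⟨f ⁻¹' A, ?_, ?_, ?_⟩
  · rwa [Set.ncard_preimage_of_injective_subset_range hbij.1 hrange]
  · rw [Set.ncard_preimage_of_injective_subset_range hbij.1 hrange,
      Nat.card_eq_of_bijective f hbij]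
    exact hA2
  · rintro v hv ⟨⟨s1, hs1, ha1⟩, ⟨s2, hs2, ha2⟩⟩
    exact hA3 (f v) hv ⟨⟨f s1, hs1, (hiff _ _).mp ha1⟩, ⟨f s2, hs2, (hiff _ _).mp ha2⟩⟩

/-- The tournament on `Fin M` with adjacency `deltaDir`. -/
def finDelta (M : ℕ) : Tournament where
  V := Fin M
  adj := deltaDir
  irrefl := deltaDir_irrefl
  total := fun _ _ h => deltaDir_total h
  asymm := fun _ _ h => deltaDir_asymm h

lemma finDelta_adj {M : ℕ} (i j : Fin M) : (finDelta M).adj i j ↔ deltaDir i j := Iff.rfl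

lemma utour_iso_finDelta (n : ℕ) : (Utour n).Iso (finDelta (2 * n - 1)) := by
  refine ⟨fun i => ⟨i, ()⟩, ⟨fun a b h => ?_, fun x => ⟨x.1, ?_⟩⟩, ?_⟩
  · exact congrArg Sigma.fst h
  · rcases x with ⟨i, ⟨⟩⟩
    rfl
  · intro u v
    by_cases huv : u = v
    · subst huv
      constructor
      · intro h; exact absurd h ((finDelta _).irrefl u)
      · intro h; exact absurd h ((Utour n).irrefl _)
    · have hne : ((⟨u, ()⟩ : (Utour n).V)).1 ≠ (⟨v, ()⟩ : (Utour n).V).1 := huv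
      rw [utour_adj_cross _ _ hne]
      exact Iff.rfl

lemma finDelta_prime (M : ℕ) (h3 : 3 ≤ M) (hodd : M % 2 = 1) : (finDelta M).Prime := by
  rintro ⟨S, h1, h2, hmix⟩
  have hncard : Nat.card (finDelta M).V = M := by
    simp [finDelta, Nat.card_eq_fintype_card]
  have hS : S.Finite := Set.toFinite S
  obtain ⟨a, ha, b, hb, hab⟩ := (Set.one_lt_ncard hS).mp h1
  -- interval property
  have key : ∀ d : ℕ, ∀ u v w : Fin M, u ∈ S → v ∈ S → u.1 < w.1 → w.1 < v.1 →
      v.1 - u.1 ≤ d → w ∈ S := by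
    intro d
    induction d with
    | zero => intro u v w _ _ h1' h2' h3'; omega
    | succ d ih =>
      intro u v w hu hv huw hwv hd
      have hvM : v.1 < M := v.2
      have hxlt : u.1 + 1 < M := by omega
      set x : Fin M := ⟨u.1 + 1, hxlt⟩ with hxdef
      have hx1 : x.1 = u.1 + 1 := rfl
      by_cases hx : x ∈ S
      · rcases eq_or_lt_of_le (show x.1 ≤ w.1 by omega) with he | hlt
        · rwa [show w = x from Fin.ext he.symm]
        · exact ih x v w hx hv hlt hwv (by omega)
      · have hux : (finDelta M).adj u x := by
          rw [finDelta_adj, deltaDir_iff]; omega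
        by_cases hxv : (finDelta M).adj x v
        · exact absurd ⟨⟨v, hv, hxv⟩, ⟨u, hu, hux⟩⟩ (hmix x hx)
        · have hpar : x.1 % 2 = 0 ∧ v.1 % 2 = 0 := by
            rw [finDelta_adj, deltaDir_iff] at hxv
            omega
          have hylt : v.1 - 1 < M := by omega
          set y : Fin M := ⟨v.1 - 1, hylt⟩ with hydef
          have hy1 : y.1 = v.1 - 1 := rfl
          by_cases hy : y ∈ S
          · rcases eq_or_lt_of_le (show w.1 ≤ y.1 by omega) with he | hlt
            · rwa [show w = y from Fin.ext he]
            · exact ih u y w hu hy huw hlt (by omega)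
          · have hyv : (finDelta M).adj y v := by
              rw [finDelta_adj, deltaDir_iff]; omega
            have huy : (finDelta M).adj u y := by
              rw [finDelta_adj, deltaDir_iff]; omega
            exact absurd ⟨⟨v, hv, hyv⟩, ⟨u, hu, huy⟩⟩ (hmix y hy)
  -- min and max
  letI : LinearOrder (finDelta M).V := inferInstanceAs (LinearOrder (Fin M))
  have hane : (hS.toFinset).Nonempty := ⟨a, hS.mem_toFinset.mpr ha⟩
  set a0 := hS.toFinset.min' hane with ha0def
  set b0 := hS.toFinset.max' hane with hb0def
  have ha0S : a0 ∈ S := hS.mem_toFinset.mp (hS.toFinset.min'_mem hane)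
  have hb0S : b0 ∈ S := hS.mem_toFinset.mp (hS.toFinset.max'_mem hane)
  have hbound : ∀ c ∈ S, a0.1 ≤ c.1 ∧ c.1 ≤ b0.1 := by
    intro c hc
    constructor
    · exact hS.toFinset.min'_le c (hS.mem_toFinset.mpr hc)
    · exact hS.toFinset.le_max' c (hS.mem_toFinset.mpr hc)
  have ha0b0 : a0.1 < b0.1 := by
    have h1' := hbound a ha
    have h2' := hbound b hb
    have hne := Fin.val_ne_of_ne hab
    omega
  have hint : ∀ w : Fin M, a0.1 ≤ w.1 → w.1 ≤ b0.1 → w ∈ S := by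
    intro w hw1 hw2
    rcases eq_or_lt_of_le hw1 with he | hlt
    · rwa [show w = a0 from Fin.ext he.symm]
    · rcases eq_or_lt_of_le hw2 with he | hlt2
      · rwa [show w = b0 from Fin.ext he]
      · exact key (b0.1 - a0.1) a0 b0 w ha0S hb0S hlt hlt2 le_rfl
  have hnotS : ∀ x : Fin M, (x.1 < a0.1 ∨ b0.1 < x.1) → x ∉ S := by
    intro x hx hxS
    have := hbound x hxS
    omega
  have hb0M : b0.1 < M := b0.2
  by_cases hb0e : b0.1 % 2 = 0
  · by_cases ha0e : a0.1 % 2 = 0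
    · -- both endpoints even: find a vertex outside
      have hcex : ∃ c : Fin M, c ∉ S := by
        by_contra hc
        push_neg at hc
        have hU : S = Set.univ := Set.eq_univ_of_forall hc
        rw [hU, Set.ncard_univ] at h2
        exact lt_irrefl _ h2
      obtain ⟨c, hc⟩ := hcex
      have hcout : c.1 < a0.1 ∨ b0.1 < c.1 := by
        by_contra hco
        push_neg at hco
        exact hc (hint c (by omega) (by omega))
      rcases hcout with hcl | hcr
      · -- a0.1 ≥ 2
        have hxlt : a0.1 - 2 < M := by omega
        set x : Fin M := ⟨a0.1 - 2, hxlt⟩ with hxdef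
        have hx1 : x.1 = a0.1 - 2 := rfl
        have hxS : x ∉ S := hnotS x (by omega)
        have hylt : a0.1 + 1 < M := by omega
        set y : Fin M := ⟨a0.1 + 1, hylt⟩ with hydef
        have hy1 : y.1 = a0.1 + 1 := rfl
        have hyS : y ∈ S := hint y (by omega) (by omega)
        have hout : (finDelta M).adj x y := by
          rw [finDelta_adj, deltaDir_iff]; omega
        have hin : (finDelta M).adj a0 x := by
          exact (deltaDir_iff (M := M) a0 x).mpr (by omega)
        exact absurd ⟨⟨y, hyS, hout⟩, ⟨a0, ha0S, hin⟩⟩ (hmix x hxS)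
      · -- b0.1 + 2 < M
        have hxlt : b0.1 + 2 < M := by omega
        set x : Fin M := ⟨b0.1 + 2, hxlt⟩ with hxdef
        have hx1 : x.1 = b0.1 + 2 := rfl
        have hxS : x ∉ S := hnotS x (by omega)
        have hylt : b0.1 - 1 < M := by omega
        set y : Fin M := ⟨b0.1 - 1, hylt⟩ with hydef
        have hy1 : y.1 = b0.1 - 1 := rfl
        have hyS : y ∈ S := hint y (by omega) (by omega)
        have hout : (finDelta M).adj x b0 := by
          exact (deltaDir_iff (M := M) x b0).mpr (by omega)
        have hin : (finDelta M).adj y x := by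
          rw [finDelta_adj, deltaDir_iff]; omega
        exact absurd ⟨⟨b0, hb0S, hout⟩, ⟨y, hyS, hin⟩⟩ (hmix x hxS)
    · -- a0 odd
      have hxlt : a0.1 - 1 < M := by omega
      set x : Fin M := ⟨a0.1 - 1, hxlt⟩ with hxdef
      have hx1 : x.1 = a0.1 - 1 := rfl
      have hxS : x ∉ S := hnotS x (by omega)
      have hylt : a0.1 + 1 < M := by omega
      set y : Fin M := ⟨a0.1 + 1, hylt⟩ with hydef
      have hy1 : y.1 = a0.1 + 1 := rfl
      have hyS : y ∈ S := hint y (by omega) (by omega)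
      have hout : (finDelta M).adj x a0 := by
        exact (deltaDir_iff (M := M) x a0).mpr (by omega)
      have hin : (finDelta M).adj y x := by
        rw [finDelta_adj, deltaDir_iff]; omega
      exact absurd ⟨⟨a0, ha0S, hout⟩, ⟨y, hyS, hin⟩⟩ (hmix x hxS)
  · -- b0 odd, hence b0.1 + 1 < M since M - 1 is even
    have hxlt : b0.1 + 1 < M := by omega
    set x : Fin M := ⟨b0.1 + 1, hxlt⟩ with hxdef
    have hx1 : x.1 = b0.1 + 1 := rfl
    have hxS : x ∉ S := hnotS x (by omega)
    have hylt : b0.1 - 1 < M := by omega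
    set y : Fin M := ⟨b0.1 - 1, hylt⟩ with hydef
    have hy1 : y.1 = b0.1 - 1 := rfl
    have hyS : y ∈ S := hint y (by omega) (by omega)
    have hout : (finDelta M).adj x y := by
      rw [finDelta_adj, deltaDir_iff]; omega
    have hin : (finDelta M).adj b0 x := by
      exact (deltaDir_iff (M := M) b0 x).mpr (by omega)
    exact absurd ⟨⟨y, hyS, hout⟩, ⟨b0, hb0S, hin⟩⟩ (hmix x hxS)

lemma key_lemma {M : ℕ} (T : Tournament) (hcard : 3 ≤ Nat.card T.V) (hprime : T.Prime)
    (idx : T.V → Fin M) (hinj : Function.Injective idx)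
    (hadj : ∀ u v : T.V, u ≠ v → (T.adj u v ↔ deltaDir (idx u) (idx v))) :
    ∃ n : ℕ, 2 ≤ n ∧ T.Iso (Utour n) := by
  classical
  have hcard' : 3 ≤ Fintype.card T.V := by rwa [Nat.card_eq_fintype_card] at hcard
  set s := Fintype.card T.V with hs
  set J : Finset (Fin M) := Finset.image idx Finset.univ with hJ
  have hJcard : J.card = s := by
    rw [hJ, Finset.card_image_of_injective _ hinj, Finset.card_univ]
  set e := J.orderIsoOfFin hJcard with he
  set j : Fin s → Fin M := fun p => (e p : Fin M) with hj
  have jmono : StrictMono j := fun p q hpq =>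
    Subtype.coe_lt_coe.mpr ((OrderIso.lt_iff_lt e).mpr hpq)
  have jinj : Function.Injective j := jmono.injective
  have jmem : ∀ p, j p ∈ J := fun p => (e p).2
  have jsurj : ∀ w, w ∈ J → ∃ p, j p = w := fun w hw =>
    ⟨e.symm ⟨w, hw⟩, by simp [hj]⟩
  have hgex : ∀ p : Fin s, ∃ v : T.V, idx v = j p := fun p => by
    have hm := jmem p
    rw [hJ, Finset.mem_image] at hm
    obtain ⟨v, _, hv⟩ := hm
    exact ⟨v, hv⟩
  set g : Fin s → T.V := fun p => (hgex p).choose with hg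
  have hgspec : ∀ p, idx (g p) = j p := fun p => (hgex p).choose_spec
  have ginj : Function.Injective g := fun p q h => jinj (by rw [← hgspec, ← hgspec, h])
  have gsurj : Function.Surjective g := fun v => by
    obtain ⟨p, hp⟩ := jsurj (idx v)
      (by rw [hJ]; exact Finset.mem_image_of_mem idx (Finset.mem_univ v))
    exact ⟨p, hinj (by rw [hgspec, hp])⟩
  have noBetween : ∀ (p q : Fin s), p.1 + 1 = q.1 → ∀ w ∈ J, ¬(j p < w ∧ w < j q) := by
    rintro p q hpq w hw ⟨hw1, hw2⟩
    obtain ⟨r, rfl⟩ := jsurj w hw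
    have hr1 : p < r := jmono.lt_iff_lt.mp hw1
    have hr2 : r < q := jmono.lt_iff_lt.mp hw2
    rw [Fin.lt_def] at hr1 hr2
    omega
  -- parities of consecutive elements differ
  have alt : ∀ (p q : Fin s), p.1 + 1 = q.1 → ¬((j p).1 % 2 = (j q).1 % 2) := by
    intro p q hpq hpar
    have hlt : j p < j q := jmono (by rw [Fin.lt_def]; omega)
    have hltv : (j p).1 < (j q).1 := hlt
    have hgpq : g p ≠ g q := fun h => ne_of_lt hlt (by rw [← hgspec, ← hgspec, h])
    apply hprime
    refine ⟨{g p, g q}, ?_, ?_, ?_⟩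
    · rw [Set.ncard_pair hgpq]; omega
    · rw [Set.ncard_pair hgpq, Nat.card_eq_fintype_card]; omega
    · rintro v hv ⟨⟨s1, hs1, ha1⟩, ⟨s2, hs2, ha2⟩⟩
      have hvp : v ≠ g p := fun h => hv (by rw [h]; exact Set.mem_insert _ _)
      have hvq : v ≠ g q := fun h =>
        hv (by rw [h]; exact Set.mem_insert_of_mem _ (Set.mem_singleton _))
      have hwa : idx v ≠ j p := fun h => hvp (hinj (by rw [h, hgspec]))
      have hwb : idx v ≠ j q := fun h => hvq (hinj (by rw [h, hgspec]))
      have hmemJ : idx v ∈ J := by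
        rw [hJ]; exact Finset.mem_image_of_mem idx (Finset.mem_univ v)
      have houtside : (idx v).1 < (j p).1 ∨ (j q).1 < (idx v).1 := by
        have hnb := noBetween p q hpq (idx v) hmemJ
        rw [Fin.lt_def, Fin.lt_def] at hnb
        have h1 := Fin.val_ne_of_ne hwa
        have h2 := Fin.val_ne_of_ne hwb
        by_contra hcon
        push_neg at hcon
        exact hnb ⟨by omega, by omega⟩
      have key2 : ∀ c : T.V, c ∈ ({g p, g q} : Set T.V) →
          (deltaDir (idx v) (idx c) ↔ deltaDir (idx v) (j p)) := by
        rintro c (rfl | rfl)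
        · rw [hgspec]
        · rw [hgspec]
          rw [deltaDir_iff, deltaDir_iff]
          omega
      have d1 : deltaDir (idx v) (j p) :=
        (key2 s1 hs1).mp ((hadj v s1 (fun h => hv (h ▸ hs1))).mp ha1)
      have d2 : deltaDir (idx s2) (idx v) :=
        (hadj s2 v (fun h => hv (h ▸ hs2))).mp ha2
      have d2' : deltaDir (idx v) (j p) → False := fun hd =>
        deltaDir_asymm ((key2 s2 hs2).mpr hd) d2
      exact d2' d1
  -- the first element has even position
  have hs1lt : 0 < s := by omega
  have hbot : (j ⟨0, hs1lt⟩).1 % 2 = 0 := by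
    by_contra hodd0
    apply hprime
    refine ⟨({g ⟨0, hs1lt⟩} : Set T.V)ᶜ, ?_, ?_, ?_⟩
    · have hcompl := Set.ncard_add_ncard_compl ({g ⟨0, hs1lt⟩} : Set T.V)
      rw [Set.ncard_singleton, Nat.card_eq_fintype_card] at hcompl
      omega
    · have hcompl := Set.ncard_add_ncard_compl ({g ⟨0, hs1lt⟩} : Set T.V)
      rw [Set.ncard_singleton, Nat.card_eq_fintype_card] at hcompl
      rw [Nat.card_eq_fintype_card]
      omega
    · intro v hv
      have hveq : v = g ⟨0, hs1lt⟩ := by simpa using hv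
      subst hveq
      rintro ⟨⟨s1, hs1, ha1⟩, ⟨s2, hs2, ha2⟩⟩
      have hs2ne : s2 ≠ g ⟨0, hs1lt⟩ := by simpa using hs2
      obtain ⟨r, hr⟩ := jsurj (idx s2)
        (by rw [hJ]; exact Finset.mem_image_of_mem idx (Finset.mem_univ s2))
      have hrne : (0 : ℕ) < r.1 := by
        rcases Nat.eq_zero_or_pos r.1 with h0 | h0
        · exfalso
          apply hs2ne
          apply hinj
          rw [hgspec, ← hr]
          congr 1
          exact Fin.ext h0
        · exact h0
      have hlt : (j ⟨0, hs1lt⟩).1 < (idx s2).1 := by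
        rw [← hr]
        exact jmono (show (⟨0, hs1lt⟩ : Fin s) < r from by rw [Fin.lt_def]; exact hrne)
      have hdom : deltaDir (idx (g ⟨0, hs1lt⟩)) (idx s2) := by
        rw [hgspec, deltaDir_iff]
        omega
      exact deltaDir_asymm hdom ((hadj s2 _ hs2ne).mp ha2)
  -- the last element has even position
  have hslt : s - 1 < s := by omega
  have htop : (j ⟨s - 1, hslt⟩).1 % 2 = 0 := by
    by_contra hodd0
    apply hprime
    refine ⟨({g ⟨s - 1, hslt⟩} : Set T.V)ᶜ, ?_, ?_, ?_⟩
    · have hcompl := Set.ncard_add_ncard_compl ({g ⟨s - 1, hslt⟩} : Set T.V)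
      rw [Set.ncard_singleton, Nat.card_eq_fintype_card] at hcompl
      omega
    · have hcompl := Set.ncard_add_ncard_compl ({g ⟨s - 1, hslt⟩} : Set T.V)
      rw [Set.ncard_singleton, Nat.card_eq_fintype_card] at hcompl
      rw [Nat.card_eq_fintype_card]
      omega
    · intro v hv
      have hveq : v = g ⟨s - 1, hslt⟩ := by simpa using hv
      subst hveq
      rintro ⟨⟨s1, hs1, ha1⟩, ⟨s2, hs2, ha2⟩⟩
      have hs1ne : s1 ≠ g ⟨s - 1, hslt⟩ := by simpa using hs1
      obtain ⟨r, hr⟩ := jsurj (idx s1)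
        (by rw [hJ]; exact Finset.mem_image_of_mem idx (Finset.mem_univ s1))
      have hrne : r.1 < s - 1 := by
        rcases lt_or_ge r.1 (s - 1) with h0 | h0
        · exact h0
        · exfalso
          apply hs1ne
          apply hinj
          rw [hgspec, ← hr]
          congr 1
          exact Fin.ext (show r.1 = s - 1 by have := r.2; omega)
      have hlt : (idx s1).1 < (j ⟨s - 1, hslt⟩).1 := by
        rw [← hr]
        exact jmono (show r < (⟨s - 1, hslt⟩ : Fin s) from by rw [Fin.lt_def]; exact hrne)
      have hdom : deltaDir (idx s1) (idx (g ⟨s - 1, hslt⟩)) := by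
        rw [hgspec, deltaDir_iff]
        omega
      exact deltaDir_asymm hdom ((hadj _ s1 (Ne.symm hs1ne)).mp ha1)
  -- parity of positions
  have parity : ∀ (pv : ℕ) (hp : pv < s), (j ⟨pv, hp⟩).1 % 2 = pv % 2 := by
    intro pv
    induction pv with
    | zero => intro hp; exact hbot
    | succ pv ih =>
      intro hp
      have h1 := ih (by omega)
      have h2 := alt ⟨pv, by omega⟩ ⟨pv + 1, hp⟩ rfl
      omega
  have parityFin : ∀ p : Fin s, (j p).1 % 2 = p.1 % 2 := fun p => parity p.1 p.2
  have hlastpar := parity (s - 1) hslt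
  have hsodd : s % 2 = 1 := by omega
  set n := (s + 1) / 2 with hn
  have hn2 : 2 ≤ n := by omega
  have hns : 2 * n - 1 = s := by omega
  refine ⟨n, hn2, fun x => g (Fin.cast hns x.1), ⟨?_, ?_⟩, ?_⟩
  · rintro ⟨p, ⟨⟩⟩ ⟨q, ⟨⟩⟩ h
    have h2 := ginj h
    have h3 : (Fin.cast hns p).1 = (Fin.cast hns q).1 := congrArg Fin.val h2
    have hpq : p = q := Fin.ext h3
    subst hpq
    rfl
  · intro v
    obtain ⟨p, hp⟩ := gsurj v
    refine ⟨⟨Fin.cast hns.symm p, ()⟩, ?_⟩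
    show g (Fin.cast hns (Fin.cast hns.symm p)) = v
    rw [show Fin.cast hns (Fin.cast hns.symm p) = p from Fin.ext rfl]
    exact hp
  · rintro ⟨p, ⟨⟩⟩ ⟨q, ⟨⟩⟩
    by_cases hpq : p = q
    · subst hpq
      constructor
      · intro h; exact absurd h ((Utour n).irrefl _)
      · intro h; exact absurd h (T.irrefl _)
    · have hne : ((⟨p, ()⟩ : (Utour n).V)).1 ≠ (⟨q, ()⟩ : (Utour n).V).1 := hpq
      rw [utour_adj_cross _ _ hne]
      have hgne : g (Fin.cast hns p) ≠ g (Fin.cast hns q) := fun h => by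
        have h3 : (Fin.cast hns p).1 = (Fin.cast hns q).1 := congrArg Fin.val (ginj h)
        exact hpq (Fin.ext h3)
      rw [hadj _ _ hgne, hgspec, hgspec]
      show deltaDir p q ↔ _
      have hvlt : ∀ x y : Fin s, (j x).1 < (j y).1 ↔ x.1 < y.1 := fun x y => by
        rw [← Fin.lt_def, ← Fin.lt_def]
        exact jmono.lt_iff_lt
      rw [deltaDir_iff, deltaDir_iff, hvlt, hvlt]
      rw [parityFin, parityFin]
      simp only [Fin.coe_cast]
      try tauto

lemma forward_lemma : ∀ m : ℕ, ∀ T : Tournament, (Atour m).Contains T →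
    3 ≤ Nat.card T.V → T.Prime → ∃ n : ℕ, 2 ≤ n ∧ T.Iso (Utour n) := by
  intro m
  induction m using Nat.strong_induction_on with
  | _ m ih =>
    rcases m with - | m'
    · intro T hcont hcard _
      obtain ⟨f, hinj, -⟩ := hcont
      have hle := Nat.card_le_card_of_injective f hinj
      have h1 : Nat.card (Atour 0).V = 1 := (Nat.card_unique : Nat.card Unit = 1)
      omega
    rcases m' with - | k
    · intro T hcont hcard _
      obtain ⟨f, hinj, -⟩ := hcont
      have hle := Nat.card_le_card_of_injective f hinj
      have h1 : Nat.card (Atour (0 + 1)).V = 1 := (Nat.card_unique : Nat.card Unit = 1)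
      omega
    · intro T hcont hcard hprime
      classical
      set F : Fin (2 * (k + 2) - 1) → Tournament :=
        fun t => if Even t.1 then oneTour else Atour (k + 1) with hF
      have hcont' : (deltaSum F).Contains T := hcont
      obtain ⟨f, hinj, hiff⟩ := hcont'
      by_cases hsame : ∀ u v : T.V, (f u).1 = (f v).1
      · -- all vertices in the same part
        have hpos : 0 < Nat.card T.V := by omega
        obtain ⟨⟨v0⟩, -⟩ := Nat.card_pos_iff.mp hpos
        set i := (f v0).1 with hi
        have hall : ∀ v, (f v).1 = i := fun v => hsame v v0
        have hex : ∀ v, ∃ w : (F i).V, f v = ⟨i, w⟩ := by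
          intro v
          have h := hall v
          rcases hfv : f v with ⟨jj, w⟩
          rw [hfv] at h
          have h' : jj = i := h
          subst h'
          exact ⟨w, rfl⟩
        set g : T.V → (F i).V := fun v => (hex v).choose with hgdef
        have hgs : ∀ v, f v = ⟨i, g v⟩ := fun v => (hex v).choose_spec
        have hginj : Function.Injective g := fun u v h => hinj (by rw [hgs u, hgs v, h])
        have hcont2 : (F i).Contains T := ⟨g, hginj, fun u v => by
          rw [hiff u v, hgs u, hgs v, deltaSum_adj_same]⟩
        by_cases hieven : Even i.1
        · have hFi : F i = oneTour := if_pos hieven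
          rw [hFi] at hcont2
          obtain ⟨g', hg', -⟩ := hcont2
          have hle := Nat.card_le_card_of_injective g' hg'
          have h1 : Nat.card oneTour.V = 1 := (Nat.card_unique : Nat.card Unit = 1)
          omega
        · have hFi : F i = Atour (k + 1) := if_neg hieven
          rw [hFi] at hcont2
          exact ih (k + 1) (by omega) T hcont2 hcard hprime
      · -- all parts are singletons
        push_neg at hsame
        obtain ⟨u0, v0, hne0⟩ := hsame
        have hidxinj : Function.Injective (fun v : T.V => (f v).1) := by
          intro u v huv
          by_contra hne
          apply hprime
          refine ⟨{w : T.V | (f w).1 = (f u).1}, ?_, ?_, ?_⟩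
          · rw [Set.one_lt_ncard_iff (Set.toFinite _)]
            refine ⟨u, v, rfl, ?_, hne⟩
            show (f v).1 = (f u).1
            exact (show (f u).1 = (f v).1 from huv).symm
          · have hout : ∃ z : T.V, (f z).1 ≠ (f u).1 := by
              rcases eq_or_ne (f u0).1 (f u).1 with h0 | h0
              · exact ⟨v0, fun hh => hne0 (h0.trans hh.symm)⟩
              · exact ⟨u0, h0⟩
            obtain ⟨z, hz⟩ := hout
            have hss : {w : T.V | (f w).1 = (f u).1} ⊂ Set.univ :=
              ⟨Set.subset_univ _, fun hsub => hz (hsub (Set.mem_univ z))⟩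
            have hlt := Set.ncard_lt_ncard hss Set.finite_univ
            rwa [Set.ncard_univ] at hlt
          · rintro z hz ⟨⟨s1, hs1, ha1⟩, ⟨s2, hs2, ha2⟩⟩
            have hzs1 : (f z).1 ≠ (f s1).1 := by
              rw [show (f s1).1 = (f u).1 from hs1]; exact hz
            have hzs2 : (f s2).1 ≠ (f z).1 := by
              rw [show (f s2).1 = (f u).1 from hs2]
              exact fun hh => hz hh.symm
            have d1 : deltaDir (f z).1 (f s1).1 := by
              rw [← deltaSum_adj_cross F (f z) (f s1) hzs1]
              exact (hiff z s1).mp ha1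
            have d2 : deltaDir (f s2).1 (f z).1 := by
              rw [← deltaSum_adj_cross F (f s2) (f z) hzs2]
              exact (hiff s2 z).mp ha2
            rw [show (f s1).1 = (f u).1 from hs1] at d1
            rw [show (f s2).1 = (f u).1 from hs2] at d2
            exact deltaDir_asymm d1 d2
        refine key_lemma T hcard hprime (fun v => (f v).1) hidxinj ?_
        intro u v huv
        rw [hiff u v, deltaSum_adj_cross F (f u) (f v) (fun h => huv (hidxinj h))]

end Tournament

open Tournament in
/-- A tournament in `𝒜` with at least three vertices is prime iff
it is isomorphic to `U_n` for some `n ≥ 2`. -/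
theorem prime_iff_iso_Utour (T : Tournament) (hT : T ∈ classA)
    (hcard : 3 ≤ Nat.card T.V) :
    T.Prime ↔ ∃ n : ℕ, 2 ≤ n ∧ T.Iso (Utour n) := by
  constructor
  · intro hp
    obtain ⟨m, -, hc⟩ := hT
    exact forward_lemma m T hc hcard hp
  · rintro ⟨n, hn, hiso⟩
    have hUp : (Utour n).Prime :=
      prime_of_iso (utour_iso_finDelta n)
        (finDelta_prime (2 * n - 1) (by omega) (by omega))
    exact prime_of_iso hiso hUp
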